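/- For any two strongly admissible labellings Lab1 ⊑ Lab2 with min-max numberings MM1 and MM2 respectively, it need not be that MM2 restricted to the domain of MM1 equals MM1; however, for every in- or out-labelled argument x of Lab1, MM2(x) ≤ MM1(x). -/
import Mathlib


inductive Label where
  | inn | out | und
deriving DecidableEq

/-- A labelling is admissible if every in-labelled argument has all its attackers
labelled out, and every out-labelled argument has at least one in-labelled attacker. -/
def Admissible {Ar : Type*} (att : Ar → Ar → Prop) (L : Ar → Label) : Prop :=
  (∀ x, L x = Label.inn → ∀ y, att y x → L y = Label.out) ∧
  (∀ x, L x = Label.out → ∃ y, att y x ∧ L y = Label.inn)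

/-- A min-max numbering (with only natural-number values): in-arguments are numbered
1 + max of the numbers of their out-labelled attackers (max ∅ = 0), and out-arguments
1 + min of the numbers of their in-labelled attackers. -/
def IsMinMax {Ar : Type*} (att : Ar → Ar → Prop) (L : Ar → Label) (MM : Ar → ℕ) : Prop :=
  (∀ x, L x = Label.inn → MM x = sSup (MM '' {y | att y x ∧ L y = Label.out}) + 1) ∧
  (∀ x, L x = Label.out → MM x = sInf (MM '' {y | att y x ∧ L y = Label.inn}) + 1)

/-- Strongly admissible: admissible and admitting a min-max numbering with only
natural-number (finite) values. -/
def StronglyAdmissible {Ar : Type*} (att : Ar → Ar → Prop) (L : Ar → Label) : Prop :=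
  Admissible att L ∧ ∃ MM : Ar → ℕ, IsMinMax att L MM

/-- Complete labelling: admissible, and every undec argument has an undec attacker
and no in-labelled attacker. -/
def CompleteLab {Ar : Type*} (att : Ar → Ar → Prop) (L : Ar → Label) : Prop :=
  Admissible att L ∧
  ∀ x, L x = Label.und →
    (∃ y, att y x ∧ L y = Label.und) ∧ ∀ y, att y x → L y ≠ Label.inn

/-- The order on labellings: Lab1 ⊑ Lab2 iff in(Lab1) ⊆ in(Lab2) and out(Lab1) ⊆ out(Lab2). -/
def LabLe {Ar : Type*} (L1 L2 : Ar → Label) : Prop :=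
  (∀ x, L1 x = Label.inn → L2 x = Label.inn) ∧
  (∀ x, L1 x = Label.out → L2 x = Label.out)

/-- If Lab1 ⊑ Lab2 are strongly admissible with min-max numberings
MM1 and MM2, then MM2(x) ≤ MM1(x) for every in/out argument x of Lab1. -/
theorem minMax_antitone
    {Ar : Type*} [Fintype Ar] (att : Ar → Ar → Prop) (Lab1 Lab2 : Ar → Label)
    (MM1 MM2 : Ar → ℕ)
    (h1 : Admissible att Lab1) (hmm1 : IsMinMax att Lab1 MM1)
    (h2 : Admissible att Lab2) (hmm2 : IsMinMax att Lab2 MM2)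
    (hle : LabLe Lab1 Lab2) :
    ∀ x, Lab1 x ≠ Label.und → MM2 x ≤ MM1 x := by
  have key : ∀ n : ℕ, ∀ x, MM1 x ≤ n → Lab1 x ≠ Label.und → MM2 x ≤ MM1 x := by
    intro n
    induction n with
    | zero =>
      intro x hx hund
      cases h : Lab1 x with
      | inn => have := hmm1.1 x h; omega
      | out => have := hmm1.2 x h; omega
      | und => exact absurd h hund
    | succ n ih =>
      intro x hx hund
      cases h : Lab1 x with
      | und => exact absurd h hund
      | inn =>
        have h2x : Lab2 x = Label.inn := hle.1 x h
        have hS : {y | att y x ∧ Lab2 y = Label.out} = {y | att y x ∧ Lab1 y = Label.out} := by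
          ext y
          exact ⟨fun hy => ⟨hy.1, h1.1 x h y hy.1⟩, fun hy => ⟨hy.1, h2.1 x h2x y hy.1⟩⟩
        have e1 := hmm1.1 x h
        have e2 := hmm2.1 x h2x
        rw [hS] at e2
        rw [e1, e2]
        have hbdd : BddAbove (MM1 '' {y | att y x ∧ Lab1 y = Label.out}) :=
          (Set.toFinite _).bddAbove
        rcases Set.eq_empty_or_nonempty {y | att y x ∧ Lab1 y = Label.out} with he | hne
        · simp [he]
        · have hsup : sSup (MM2 '' {y | att y x ∧ Lab1 y = Label.out}) ≤
              sSup (MM1 '' {y | att y x ∧ Lab1 y = Label.out}) := by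
            apply csSup_le (hne.image _)
            rintro b ⟨y, hy, rfl⟩
            have hle1 : MM1 y ≤ sSup (MM1 '' {y | att y x ∧ Lab1 y = Label.out}) :=
              le_csSup hbdd ⟨y, hy, rfl⟩
            have h2y : MM2 y ≤ MM1 y := by
              apply ih y (by omega)
              simp [hy.2]
            exact le_trans h2y hle1
          omega
      | out =>
        have h2x : Lab2 x = Label.out := hle.2 x h
        obtain ⟨y, hatt, hyin⟩ := h1.2 x h
        have e1 := hmm1.2 x h
        have e2 := hmm2.2 x h2x
        have hne : (MM1 '' {y | att y x ∧ Lab1 y = Label.inn}).Nonempty :=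
          ⟨MM1 y, y, ⟨hatt, hyin⟩, rfl⟩
        obtain ⟨z, hz, hzeq⟩ := Nat.sInf_mem hne
        have hz1 : MM1 x = MM1 z + 1 := by rw [e1, hzeq]
        have hz2 : MM2 z ≤ MM1 z := by
          apply ih z (by omega)
          simp [hz.2]
        have hmem : MM2 z ∈ MM2 '' {y | att y x ∧ Lab2 y = Label.inn} :=
          ⟨z, ⟨hz.1, hle.1 z hz.2⟩, rfl⟩
        have := Nat.sInf_le hmem
        omega
  intro x hx
  exact key (MM1 x) x le_rfl hx
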